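/- Let n > 3 be odd, define β_n^e(k;M) = R_n r_n [R_n(r_n² − 1)(cos(kθ_n) − 1) − sin(kθ_n)/tan((2M+1)θ_n)], and set M₀ = (n−1)/4 if n ≡ 1 (mod 4) and M₀ = (n−3)/4 if n ≡ 3 (mod 4). Then for every even integer k with 2 ≤ k ≤ (n−1)/2 and every M ∈ {0,…,(n−3)/2}: if n ≡ 1 (mod 4), then β_n^e(k;M) < 0 for M < M₀ and β_n^e(k;M) > 0 for M ≥ M₀; if n ≡ 3 (mod 4), then β_n^e(k;M) < 0 for M ≤ M₀ and β_n^e(k;M) > 0 for M > M₀. -/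

import Mathlib

noncomputable section

/-- The angle `θ_n = π / n`. -/
def thetaN (n : ℕ) : ℝ := Real.pi / n

/-- `r_n = (cos θ_n)^{-1/2}`. -/
def rN (n : ℕ) : ℝ := Real.sqrt (Real.cos (thetaN n))⁻¹

/-- `R_n = 1 / (1 + r_n²)`. -/
def RN (n : ℕ) : ℝ := 1 / (1 + rN n ^ 2)

/-- `β_n^e(k;M) = R_n r_n [R_n(r_n² − 1)(cos(kθ_n) − 1) − sin(kθ_n)/tan((2M+1)θ_n)]`. -/
def betaE (n k M : ℕ) : ℝ :=
  RN n * rN n * (RN n * (rN n ^ 2 - 1) * (Real.cos ((k : ℝ) * thetaN n) - 1)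
    - Real.sin ((k : ℝ) * thetaN n) / Real.tan ((2 * (M : ℝ) + 1) * thetaN n))

open Real in
lemma tan_prod_lt_one {s a b : ℝ} (hs0 : 0 < s) (hs : s < π/4) (ha0 : 0 < a)
    (ha : a < π/4) (hb0 : 0 < b) (hb : b ≤ π/2 - s) :
    tan s ^ 2 * tan a * tan b < 1 := by
  have hpi := pi_pos
  have hts : 0 < tan s := tan_pos_of_pos_of_lt_pi_div_two hs0 (by linarith)
  have hta : 0 < tan a := tan_pos_of_pos_of_lt_pi_div_two ha0 (by linarith)
  have htb : 0 < tan b := tan_pos_of_pos_of_lt_pi_div_two hb0 (by linarith)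
  have hts1 : tan s < 1 := by
    have := tan_lt_tan_of_lt_of_lt_pi_div_two (x := s) (y := π/4)
      (by linarith) (by linarith) hs
    rwa [tan_pi_div_four] at this
  have hta1 : tan a < 1 := by
    have := tan_lt_tan_of_lt_of_lt_pi_div_two (x := a) (y := π/4)
      (by linarith) (by linarith) ha
    rwa [tan_pi_div_four] at this
  have htb' : tan b ≤ (tan s)⁻¹ := by
    have h : tan b ≤ tan (π/2 - s) := by
      rcases eq_or_lt_of_le hb with h | h
      · rw [h]
      · exact (tan_lt_tan_of_lt_of_lt_pi_div_two (by linarith) (by linarith) h).le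
    rwa [tan_pi_div_two_sub] at h
  have h1 : tan s ^ 2 * tan b ≤ tan s := by
    have h2 : tan s ^ 2 * tan b ≤ tan s ^ 2 * (tan s)⁻¹ :=
      mul_le_mul_of_nonneg_left htb' (sq_nonneg _)
    have h3 : tan s ^ 2 * (tan s)⁻¹ = tan s := by
      field_simp
    linarith
  have h2 : tan s ^ 2 * tan a * tan b ≤ tan s * tan a := by
    have := mul_le_mul_of_nonneg_right h1 hta.le
    nlinarith
  nlinarith

set_option maxHeartbeats 1000000 in
/-- the sign of `β_n^e(k;M)` changes exactly at `M₀`, where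
`M₀ = (n−1)/4` if `n ≡ 1 (mod 4)` and `M₀ = (n−3)/4` if `n ≡ 3 (mod 4)`. -/
theorem betaE_sign (n : ℕ) (hodd : Odd n) (hn : 3 < n)
    (k : ℕ) (hke : Even k) (hk2 : 2 ≤ k) (hk : k ≤ (n - 1) / 2)
    (M : ℕ) (hM : M ≤ (n - 3) / 2) :
    (n % 4 = 1 →
      (M < (n - 1) / 4 → betaE n k M < 0) ∧ ((n - 1) / 4 ≤ M → 0 < betaE n k M)) ∧
    (n % 4 = 3 →
      (M ≤ (n - 3) / 4 → betaE n k M < 0) ∧ ((n - 3) / 4 < M → 0 < betaE n k M)) := by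
  obtain ⟨t, ht⟩ := hodd
  have hn5 : 5 ≤ n := by omega
  have hpi := Real.pi_pos
  obtain ⟨θ, hθ⟩ : ∃ y, thetaN n = y := ⟨_, rfl⟩
  have hn0 : (0:ℝ) < n := by positivity
  have hne : (n:ℝ) ≠ 0 := ne_of_gt hn0
  have hπθ : Real.pi = n * θ := by
    rw [← hθ, thetaN]; field_simp
  have hθ0 : 0 < θ := by
    rw [← hθ, thetaN]; positivity
  have hθ5 : 5 * θ ≤ Real.pi := by
    have h5 : (5:ℝ) ≤ n := by exact_mod_cast hn5
    have := mul_le_mul_of_nonneg_right h5 hθ0.le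
    rw [hπθ]; linarith
  have hθπ2 : θ < Real.pi / 2 := by linarith
  have hcosθ : 0 < Real.cos θ := Real.cos_pos_of_mem_Ioo ⟨by linarith, hθπ2⟩
  have hr2 : rN n ^ 2 = (Real.cos θ)⁻¹ := by
    rw [rN, hθ, Real.sq_sqrt (by positivity)]
  have hr0 : 0 < rN n := by
    rw [rN, hθ]; exact Real.sqrt_pos.mpr (by positivity)
  have hR0 : 0 < RN n := by
    rw [RN]; positivity
  have hRr : 0 < RN n * rN n := mul_pos hR0 hr0
  -- half angle s = θ/2
  obtain ⟨s, hs⟩ : ∃ y, θ / 2 = y := ⟨_, rfl⟩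
  have hs0 : 0 < s := by rw [← hs]; positivity
  have hs4 : s < Real.pi / 4 := by rw [← hs]; linarith
  have hcoss : 0 < Real.cos s := Real.cos_pos_of_mem_Ioo ⟨by linarith, by linarith⟩
  have hsins : 0 < Real.sin s := Real.sin_pos_of_pos_of_lt_pi hs0 (by linarith)
  have hsc2 := Real.sin_sq_add_cos_sq s
  have hcosθs : Real.cos θ = 1 - 2 * Real.sin s ^ 2 := by
    have h1 : Real.cos θ = 2 * Real.cos s ^ 2 - 1 := by
      rw [show θ = 2 * s by rw [← hs]; ring, Real.cos_two_mul]
    linarith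
  have hw : (0:ℝ) < 1 - 2 * Real.sin s ^ 2 := by rw [← hcosθs]; exact hcosθ
  have hA : RN n * (rN n ^ 2 - 1) = Real.tan s ^ 2 := by
    have hcs2 : Real.cos s ^ 2 = 1 - Real.sin s ^ 2 := by linarith
    have h1w : (1:ℝ) - Real.sin s ^ 2 ≠ 0 := by
      have e : (1:ℝ) - Real.sin s ^ 2 = Real.cos s ^ 2 := by linarith
      rw [e]
      positivity
    rw [RN, hr2, Real.tan_eq_sin_div_cos, div_pow, hcosθs, hcs2]
    have h2w : (1:ℝ) - 2 * Real.sin s ^ 2 ≠ 0 := ne_of_gt hw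
    have h3w : (1:ℝ) + (1 - 2 * Real.sin s ^ 2)⁻¹ ≠ 0 := by positivity
    field_simp
    ring
  -- x = k θ, a = x/2
  obtain ⟨x, hx⟩ : ∃ y, (k : ℝ) * θ = y := ⟨_, rfl⟩
  obtain ⟨a, ha⟩ : ∃ y, x / 2 = y := ⟨_, rfl⟩
  have hk2n : 2 * k + 1 ≤ n := by omega
  have hk2n' : 2 * (k:ℝ) + 1 ≤ n := by exact_mod_cast hk2n
  have hk0' : (0:ℝ) < k := by
    have : 0 < k := by omega
    exact_mod_cast this
  have hx0 : 0 < x := by rw [← hx]; exact mul_pos hk0' hθ0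
  have ha0 : 0 < a := by rw [← ha]; positivity
  have hxle : x + s ≤ Real.pi / 2 := by
    have h := mul_le_mul_of_nonneg_right hk2n' hθ0.le
    rw [← hx, ← hs, hπθ]
    linarith [h]
  have hxpi2 : x < Real.pi / 2 := by linarith
  have ha4 : a < Real.pi / 4 := by rw [← ha]; linarith
  have hsinx : Real.sin x = 2 * Real.sin a * Real.cos a := by
    rw [show x = 2 * a by rw [← ha]; ring, Real.sin_two_mul]
  have hsca := Real.sin_sq_add_cos_sq a
  have hcosx : Real.cos x = 1 - 2 * Real.sin a ^ 2 := by
    have h1 : Real.cos x = 2 * Real.cos a ^ 2 - 1 := by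
      rw [show x = 2 * a by rw [← ha]; ring, Real.cos_two_mul]
    linarith
  have hsina : 0 < Real.sin a := Real.sin_pos_of_pos_of_lt_pi ha0 (by linarith)
  have hcosa : 0 < Real.cos a := Real.cos_pos_of_mem_Ioo ⟨by linarith, by linarith⟩
  have hts0 : 0 < Real.tan s := Real.tan_pos_of_pos_of_lt_pi_div_two hs0 (by linarith)
  -- negative case
  have hneg : ∀ M' : ℕ, 2 * (2 * M' + 1) < n → betaE n k M' < 0 := by
    intro M' hM'
    have hM'r : 2 * (2 * (M':ℝ) + 1) < n := by exact_mod_cast hM'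
    have hM'0 : (0:ℝ) ≤ M' := Nat.cast_nonneg M'
    have hT0 : 0 < (2 * (M':ℝ) + 1) * θ := mul_pos (by positivity) hθ0
    have hTlt : (2 * (M':ℝ) + 1) * θ < Real.pi / 2 := by
      have h := mul_lt_mul_of_pos_right hM'r hθ0
      rw [hπθ]
      linarith [h]
    have htT : 0 < Real.tan ((2 * (M':ℝ) + 1) * θ) :=
      Real.tan_pos_of_pos_of_lt_pi_div_two hT0 hTlt
    have hbr : RN n * (rN n ^ 2 - 1) * (Real.cos x - 1)
        - Real.sin x / Real.tan ((2 * (M':ℝ) + 1) * θ) < 0 := by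
      have h1 : RN n * (rN n ^ 2 - 1) * (Real.cos x - 1) < 0 := by
        rw [hA, hcosx]
        have e : Real.tan s ^ 2 * (1 - 2 * Real.sin a ^ 2 - 1)
            = -(2 * (Real.sin a ^ 2 * Real.tan s ^ 2)) := by ring
        rw [e, neg_lt_zero]
        positivity
      have h2 : 0 < Real.sin x / Real.tan ((2 * (M':ℝ) + 1) * θ) := by
        apply div_pos _ htT
        rw [hsinx]; positivity
      linarith
    rw [betaE, hθ, hx]
    exact mul_neg_of_pos_of_neg hRr hbr
  -- positive case
  have hpos : ∀ M' : ℕ, 2 * M' + 3 ≤ n → n ≤ 4 * M' + 1 → 0 < betaE n k M' := by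
    intro M' h1 h2
    obtain ⟨j, hjdef⟩ : ∃ j, j = n - 2 * M' - 1 := ⟨_, rfl⟩
    have hjr : (j : ℝ) = n - 2 * M' - 1 := by
      have hj' : j + 2 * M' + 1 = n := by omega
      have : ((j + 2 * M' + 1 : ℕ) : ℝ) = n := by exact_mod_cast congrArg (Nat.cast : ℕ → ℝ) hj'
      push_cast at this
      linarith
    obtain ⟨b, hb⟩ : ∃ y, (j : ℝ) * θ = y := ⟨_, rfl⟩
    have hj2 : 2 ≤ j := by omega
    have hj0' : (0:ℝ) < j := by
      have : 0 < j := by omega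
      exact_mod_cast this
    have hjn : 2 * j + 1 ≤ n := by omega
    have hjn' : 2 * (j:ℝ) + 1 ≤ n := by exact_mod_cast hjn
    have hb0 : 0 < b := by rw [← hb]; exact mul_pos hj0' hθ0
    have hble : b ≤ Real.pi / 2 - s := by
      have h := mul_le_mul_of_nonneg_right hjn' hθ0.le
      rw [← hb, ← hs, hπθ]
      linarith [h]
    have hT : (2 * (M':ℝ) + 1) * θ = Real.pi - b := by
      rw [← hb, hjr, hπθ]; ring
    have htanT : Real.tan ((2 * (M':ℝ) + 1) * θ) = - Real.tan b := by
      rw [hT, Real.tan_pi_sub]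
    have htb : 0 < Real.tan b :=
      Real.tan_pos_of_pos_of_lt_pi_div_two hb0 (by linarith)
    have key : Real.tan s ^ 2 * Real.tan a * Real.tan b < 1 :=
      tan_prod_lt_one hs0 hs4 ha0 ha4 hb0 hble
    have key2 : Real.tan s ^ 2 * (2 * Real.sin a ^ 2) * Real.tan b
        < 2 * Real.sin a * Real.cos a := by
      have hca : Real.cos a ≠ 0 := ne_of_gt hcosa
      have heq : Real.tan s ^ 2 * (2 * Real.sin a ^ 2) * Real.tan b
          = (Real.tan s ^ 2 * Real.tan a * Real.tan b) * (2 * Real.sin a * Real.cos a) := by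
        rw [Real.tan_eq_sin_div_cos a]
        field_simp
      have hQ : 0 < 2 * Real.sin a * Real.cos a := by positivity
      rw [heq]
      calc (Real.tan s ^ 2 * Real.tan a * Real.tan b) * (2 * Real.sin a * Real.cos a)
          < 1 * (2 * Real.sin a * Real.cos a) := mul_lt_mul_of_pos_right key hQ
        _ = 2 * Real.sin a * Real.cos a := one_mul _
    have hbr : 0 < RN n * (rN n ^ 2 - 1) * (Real.cos x - 1)
        - Real.sin x / Real.tan ((2 * (M':ℝ) + 1) * θ) := by
      rw [htanT, hA, hcosx, hsinx, div_neg]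
      have h3 : Real.tan s ^ 2 * (2 * Real.sin a ^ 2)
          < 2 * Real.sin a * Real.cos a / Real.tan b := by
        rw [lt_div_iff₀ htb]
        linarith [key2]
      have h4 : Real.tan s ^ 2 * (1 - 2 * Real.sin a ^ 2 - 1)
          = - (Real.tan s ^ 2 * (2 * Real.sin a ^ 2)) := by ring
      rw [h4]
      linarith
    rw [betaE, hθ, hx]
    exact mul_pos hRr hbr
  refine ⟨fun h1 => ⟨fun h2 => ?_, fun h3 => ?_⟩, fun h1 => ⟨fun h2 => ?_, fun h3 => ?_⟩⟩
  · exact hneg M (by omega)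
  · exact hpos M (by omega) (by omega)
  · exact hneg M (by omega)
  · exact hpos M (by omega) (by omega)
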